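/- Let d ≥ 1 be an integer, C₀ > 0, and k₀ ≥ 1 an integer. There exists a constant C > 0, depending only on d, C₀ and k₀, such that for every integer N ≥ 1, every function σ² : ℤ^d → [0,∞) satisfying σ²(k) ≤ C₀ |k|^{1−d} whenever k₀ ≤ |k| ≤ N, σ²(k) ≤ C₀ whenever |k| < k₀, and σ²(k) = 0 whenever |k| > N, and every t ∈ (0,1), one has ∑_{n ∈ ℤ^d, n₁ > 0} 2 e^{−2|n|² t} n₁ σ²(n) ≤ C · min(N², 1/t). -/

import Mathlib

open scoped BigOperators

/-- Euclidean norm of a lattice point `n ∈ ℤ^d`, viewed in `ℝ^d`. -/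
noncomputable def znorm {d : ℕ} (n : Fin d → ℤ) : ℝ :=
  Real.sqrt (∑ i, ((n i : ℝ)) ^ 2)

open Finset

lemma znorm_nonneg {d : ℕ} (n : Fin d → ℤ) : 0 ≤ znorm n := Real.sqrt_nonneg _

lemma znorm_sq {d : ℕ} (n : Fin d → ℤ) : znorm n ^ 2 = ∑ i, ((n i : ℝ)) ^ 2 :=
  Real.sq_sqrt (by positivity)

lemma abs_le_znorm {d : ℕ} (n : Fin d → ℤ) (i : Fin d) : |((n i : ℝ))| ≤ znorm n := by
  have h1 : ((n i : ℝ)) ^ 2 ≤ ∑ j, ((n j : ℝ)) ^ 2 :=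
    Finset.single_le_sum (f := fun j => ((n j : ℝ)) ^ 2) (fun j _ => by positivity)
      (Finset.mem_univ i)
  calc |((n i : ℝ))| = Real.sqrt (((n i : ℝ)) ^ 2) := (Real.sqrt_sq_eq_abs _).symm
    _ ≤ znorm n := Real.sqrt_le_sqrt h1

lemma sum_pow_four_le (m : ℕ) : ∑ j ∈ Finset.range m, (4 : ℝ) ^ j ≤ 4 ^ m := by
  induction m with
  | zero => simp
  | succ m ih =>
    rw [Finset.sum_range_succ, pow_succ]
    have : (0:ℝ) < 4 ^ m := by positivity
    nlinarith

lemma key_exp (x t : ℝ) (hx : 0 < x) (ht : 0 < t) :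
    x * Real.exp (-2 * x * t) ≤ t⁻¹ * t⁻¹ * x⁻¹ := by
  have h1 : x * t ≤ Real.exp (x * t) := by
    have := Real.add_one_le_exp (x * t); linarith
  have hxt : 0 < x * t := mul_pos hx ht
  have h2 : (x * t) ^ 2 ≤ Real.exp (x * t) ^ 2 := by nlinarith
  have h3 : Real.exp (x * t) ^ 2 = Real.exp (2 * (x * t)) := by
    rw [← Real.exp_nat_mul]; norm_num
  have h4 : Real.exp (-2 * x * t) ≤ ((x * t) ^ 2)⁻¹ := by
    rw [show (-2 * x * t : ℝ) = -(2 * (x * t)) by ring, Real.exp_neg]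
    exact inv_anti₀ (by positivity) (h3 ▸ h2)
  calc x * Real.exp (-2 * x * t) ≤ x * ((x * t) ^ 2)⁻¹ :=
        mul_le_mul_of_nonneg_left h4 hx.le
    _ = t⁻¹ * t⁻¹ * x⁻¹ := by field_simp

set_option maxHeartbeats 2000000 in
theorem stmt0 (d : ℕ) (hd : 0 < d) (C₀ : ℝ) (hC₀ : 0 < C₀) (k₀ : ℕ) (hk₀ : 1 ≤ k₀) :
    ∃ C : ℝ, 0 < C ∧
      ∀ N : ℕ, 1 ≤ N →
      ∀ σ2 : (Fin d → ℤ) → ℝ,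
        (∀ k, 0 ≤ σ2 k) →
        (∀ k : Fin d → ℤ, (k₀ : ℝ) ≤ znorm k → znorm k ≤ (N : ℝ) →
          σ2 k ≤ C₀ * znorm k ^ ((1 : ℝ) - d)) →
        (∀ k : Fin d → ℤ, znorm k < (k₀ : ℝ) → σ2 k ≤ C₀) →
        (∀ k : Fin d → ℤ, (N : ℝ) < znorm k → σ2 k = 0) →
      ∀ t : ℝ, 0 < t → t < 1 →
        ∑' n : {n : Fin d → ℤ // 0 < n ⟨0, hd⟩},
            2 * Real.exp (-2 * znorm n.1 ^ 2 * t) * ((n.1 ⟨0, hd⟩ : ℤ) : ℝ) * σ2 n.1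
          ≤ C * min ((N : ℝ) ^ 2) (1 / t) := by
  classical
  set A : ℝ := C₀ * (k₀ : ℝ) ^ (d - 1) with hA
  have hA0 : 0 < A := by positivity
  have hk1 : (1:ℝ) ≤ (k₀:ℝ) := by exact_mod_cast hk₀
  have hA_ge : C₀ ≤ A := by
    have h1 : (1:ℝ) ≤ (k₀:ℝ) ^ (d-1) := one_le_pow₀ hk1
    nlinarith
  refine ⟨56 * (8:ℝ) ^ d * A, by positivity, ?_⟩
  intro N hN σ2 hσ0 hσ1 hσ2 hσ3 t ht ht1
  set i0 : Fin d := ⟨0, hd⟩ with hi0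
  set F : (Fin d → ℤ) → ℝ := fun n => 2 * Real.exp (-2 * znorm n ^ 2 * t) * ((n i0 : ℤ) : ℝ) * σ2 n with hF
  set Q : (Fin d → ℤ) → ℕ := fun n => ∑ i, (n i).natAbs ^ 2 with hQ
  have hQcast : ∀ n : Fin d → ℤ, (Q n : ℝ) = znorm n ^ 2 := by
    intro n
    rw [znorm_sq, hQ]
    push_cast [Nat.cast_natAbs]
    simp [sq_abs]
  have hQsingle : ∀ (n : Fin d → ℤ) (i : Fin d), (n i).natAbs ^ 2 ≤ Q n := by
    intro n i
    exact Finset.single_le_sum (f := fun j => (n j).natAbs ^ 2) (fun j _ => Nat.zero_le _)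
      (Finset.mem_univ i)
  set box : Finset (Fin d → ℤ) := Fintype.piFinset fun _ => Finset.Icc (-(N:ℤ)) (N:ℤ) with hbox
  -- outside box, σ2 vanishes
  have hout : ∀ n : Fin d → ℤ, n ∉ box → σ2 n = 0 := by
    intro n hn
    rw [hbox, Fintype.mem_piFinset] at hn
    push_neg at hn
    obtain ⟨i, hi⟩ := hn
    rw [Finset.mem_Icc] at hi
    apply hσ3
    have habs : (N:ℤ) < |n i| := by
      rcases le_or_gt (-(N:ℤ)) (n i) with h | h
      · push_neg at hi
        exact lt_of_lt_of_le (hi h) (le_abs_self _)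
      · calc (N:ℤ) < -(n i) := by linarith
          _ ≤ |n i| := neg_le_abs _
    have : (N:ℝ) < |((n i : ℝ))| := by
      rw [← Int.cast_abs]
      exact_mod_cast habs
    exact this.trans_le (abs_le_znorm n i)
  set P : (Fin d → ℤ) → Prop := fun n => 0 < n i0 ∧ Q n ≤ N ^ 2 with hPdef
  -- step 1 : tsum equals finite sum over box.filter P
  have hts : (∑' n : {n : Fin d → ℤ // 0 < n i0}, F n.1) = ∑ n ∈ box.filter P, F n := by
    rw [tsum_eq_sum (s := box.subtype (fun n => 0 < n i0)) ?_]
    · rw [Finset.sum_subtype_eq_sum_filter]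
      refine (Finset.sum_subset ?_ ?_).symm
      · intro n hn
        rw [Finset.mem_filter] at hn ⊢
        exact ⟨hn.1, hn.2.1⟩
      · intro n hn hn2
        rw [Finset.mem_filter] at hn hn2
        have hq : ¬ Q n ≤ N ^ 2 := fun h => hn2 ⟨hn.1, hn.2, h⟩
        push_neg at hq
        have hzn : (N:ℝ) < znorm n := by
          have h1 : ((N ^ 2 : ℕ) : ℝ) < (Q n : ℝ) := by exact_mod_cast hq
          rw [hQcast] at h1
          push_cast at h1
          nlinarith [znorm_nonneg n, Nat.cast_nonneg (α := ℝ) N]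
        simp [hF, hσ3 n hzn]
    · intro b hb
      have hb' : b.1 ∉ box := by
        simpa [Finset.mem_subtype] using hb
      simp [hF, hout _ hb']
  rw [show (∑' n : {n : Fin d → ℤ // 0 < n ⟨0, hd⟩},
      2 * Real.exp (-2 * znorm n.1 ^ 2 * t) * ((n.1 ⟨0, hd⟩ : ℤ) : ℝ) * σ2 n.1)
      = (∑' n : {n : Fin d → ℤ // 0 < n i0}, F n.1) from rfl, hts]
  set J : ℕ := Nat.log 4 (N ^ 2) with hJ
  set sh : (Fin d → ℤ) → ℕ := fun n => Nat.log 4 (Q n) with hsh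
  have hfib : ∑ n ∈ box.filter P, F n
      = ∑ j ∈ Finset.range (J+1), ∑ n ∈ (box.filter P).filter (fun n => sh n = j), F n := by
    refine (Finset.sum_fiberwise_of_maps_to ?_ F).symm
    intro n hn
    rw [Finset.mem_range]
    have h2 := (Finset.mem_filter.mp hn).2.2
    exact Nat.lt_succ_of_le (Nat.log_mono_right h2)
  rw [hfib]
  -- fiber bound
  have hkey : ∀ n : Fin d → ℤ, 1 ≤ znorm n → znorm n ≤ (N:ℝ) → 0 < n i0 →
      ((n i0 : ℤ) : ℝ) * σ2 n ≤ A * znorm n ^ ((2:ℝ) - d) := by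
    intro n h1 hN' hpos
    have hz0 : (0:ℝ) < znorm n := lt_of_lt_of_le one_pos h1
    have hx : ((n i0 : ℤ) : ℝ) ≤ znorm n := le_trans (le_abs_self _) (abs_le_znorm n i0)
    have hpowA : ((k₀:ℝ)) ^ (d-1) = (k₀:ℝ) ^ ((d:ℝ) - 1) := by
      rw [← Real.rpow_natCast (k₀:ℝ) (d-1)]
      congr 1
      push_cast [Nat.cast_sub hd]
      ring
    rcases le_or_gt (k₀:ℝ) (znorm n) with hk | hk
    · have hs := hσ1 n hk hN'
      have e1 : znorm n * znorm n ^ ((1:ℝ) - d) = znorm n ^ ((2:ℝ) - d) := by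
        rw [show znorm n * znorm n ^ ((1:ℝ) - d)
            = znorm n ^ (1:ℝ) * znorm n ^ ((1:ℝ) - d) by rw [Real.rpow_one],
          ← Real.rpow_add hz0]
        congr 1
        ring
      have hrp : (0:ℝ) ≤ znorm n ^ ((2:ℝ) - d) := Real.rpow_nonneg hz0.le _
      calc ((n i0 : ℤ) : ℝ) * σ2 n ≤ znorm n * (C₀ * znorm n ^ ((1:ℝ) - d)) :=
            mul_le_mul hx hs (hσ0 n) hz0.le
        _ = C₀ * znorm n ^ ((2:ℝ) - d) := by rw [← e1]; ring
        _ ≤ A * znorm n ^ ((2:ℝ) - d) := mul_le_mul_of_nonneg_right hA_ge hrp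
    · have hs := hσ2 n hk
      have hrp : (0:ℝ) ≤ znorm n ^ ((2:ℝ) - d) := Real.rpow_nonneg hz0.le _
      have e2 : znorm n ≤ (k₀:ℝ) ^ ((d:ℝ) - 1) * znorm n ^ ((2:ℝ) - d) := by
        have e3 : znorm n = znorm n ^ ((2:ℝ) - d) * znorm n ^ ((d:ℝ) - 1) := by
          rw [← Real.rpow_add hz0, show ((2:ℝ) - d) + ((d:ℝ) - 1) = 1 by ring, Real.rpow_one]
        have hle : znorm n ^ ((d:ℝ) - 1) ≤ (k₀:ℝ) ^ ((d:ℝ) - 1) := by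
          apply Real.rpow_le_rpow hz0.le hk.le
          have hd1 : (1:ℝ) ≤ (d:ℝ) := by exact_mod_cast hd
          linarith
        calc znorm n = znorm n ^ ((2:ℝ) - d) * znorm n ^ ((d:ℝ) - 1) := e3
          _ ≤ znorm n ^ ((2:ℝ) - d) * (k₀:ℝ) ^ ((d:ℝ) - 1) :=
              mul_le_mul_of_nonneg_left hle hrp
          _ = (k₀:ℝ) ^ ((d:ℝ) - 1) * znorm n ^ ((2:ℝ) - d) := mul_comm _ _
      calc ((n i0 : ℤ) : ℝ) * σ2 n ≤ znorm n * C₀ := mul_le_mul hx hs (hσ0 n) hz0.le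
        _ ≤ ((k₀:ℝ) ^ ((d:ℝ) - 1) * znorm n ^ ((2:ℝ) - d)) * C₀ :=
            mul_le_mul_of_nonneg_right e2 hC₀.le
        _ = A * znorm n ^ ((2:ℝ) - d) := by rw [hA, hpowA]; ring
  have hfiber_le : ∀ j, ∑ n ∈ (box.filter P).filter (fun n => sh n = j), F n
      ≤ (8:ℝ)^d * 8 * A * ((4:ℝ)^j * Real.exp (-2 * 4^j * t)) := by
    intro j
    set s : Finset (Fin d → ℤ) := (box.filter P).filter (fun n => sh n = j) with hsdef
    have hpoint : ∀ n ∈ s, F n ≤ 8 * A * Real.exp (-2 * (4:ℝ)^j * t) * ((4:ℝ)^j / 2^(j*d)) := by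
      intro n hn
      rw [hsdef, Finset.mem_filter] at hn
      have hpos : 0 < n i0 := (Finset.mem_filter.mp hn.1).2.1
      have hQN : Q n ≤ N ^ 2 := (Finset.mem_filter.mp hn.1).2.2
      have hshj : sh n = j := hn.2
      have hq1 : 1 ≤ Q n := by
        have hna : 0 < (n i0).natAbs := Int.natAbs_pos.mpr (ne_of_gt hpos)
        exact le_trans (Nat.one_le_pow _ _ hna) (hQsingle n i0)
      have h4j : 4 ^ j ≤ Q n := by
        rw [← hshj]
        exact Nat.pow_log_le_self 4 (by omega)
      have hqlt : Q n < 4 ^ (j+1) := by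
        rw [← hshj]
        exact Nat.lt_pow_succ_log_self (by norm_num) _
      have hQr : (Q n : ℝ) = znorm n ^ 2 := hQcast n
      have hq1r : (1:ℝ) ≤ znorm n ^ 2 := by
        rw [← hQr]; exact_mod_cast hq1
      have hz1 : 1 ≤ znorm n := by nlinarith [znorm_nonneg n]
      have hz0 : (0:ℝ) < znorm n := lt_of_lt_of_le one_pos hz1
      have hzN : znorm n ≤ (N:ℝ) := by
        have h1 : (Q n : ℝ) ≤ ((N^2 : ℕ) : ℝ) := Nat.cast_le.mpr hQN
        push_cast at h1
        rw [hQr] at h1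
        nlinarith [znorm_nonneg n, Nat.cast_nonneg (α := ℝ) N]
      have h4jr : (4:ℝ)^j ≤ znorm n ^ 2 := by
        have h1 : ((4^j : ℕ) : ℝ) ≤ (Q n : ℝ) := Nat.cast_le.mpr h4j
        push_cast at h1
        rw [hQr] at h1
        exact h1
      have hsq : ((2:ℝ)^j)^2 = (4:ℝ)^j := by
        rw [← pow_mul, mul_comm j 2, pow_mul]
        norm_num
      have hzlo : (2:ℝ)^j ≤ znorm n := by
        nlinarith [znorm_nonneg n, pow_pos (show (0:ℝ) < 2 by norm_num) j]
      have hqup : znorm n ^ 2 ≤ 4 * (4:ℝ)^j := by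
        have h1 : (Q n : ℝ) ≤ ((4^(j+1) : ℕ) : ℝ) := Nat.cast_le.mpr hqlt.le
        push_cast at h1
        rw [hQr] at h1
        calc znorm n ^ 2 ≤ (4:ℝ)^(j+1) := h1
          _ = 4 * 4^j := by ring
      have hzd : (2:ℝ)^(j*d) ≤ znorm n ^ d := by
        calc (2:ℝ)^(j*d) = ((2:ℝ)^j)^d := by rw [pow_mul]
          _ ≤ znorm n ^ d := pow_le_pow_left₀ (by positivity) hzlo d
      have hrpow : znorm n ^ ((2:ℝ) - d) ≤ 4 * (4:ℝ)^j / 2^(j*d) := by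
        have e1 : znorm n ^ ((2:ℝ) - d) = znorm n ^ 2 / znorm n ^ d := by
          rw [show ((2:ℝ) - d) = ((2:ℕ):ℝ) - ((d:ℕ):ℝ) by norm_num,
            ← Real.rpow_natCast (znorm n) 2, ← Real.rpow_natCast (znorm n) d,
            ← Real.rpow_sub hz0]
        rw [e1]
        exact div_le_div₀ (by positivity) hqup (by positivity) hzd
      have hexp : Real.exp (-2 * znorm n ^ 2 * t) ≤ Real.exp (-2 * (4:ℝ)^j * t) := by
        apply Real.exp_le_exp.mpr
        nlinarith
      have hmul : ((n i0 : ℤ) : ℝ) * σ2 n ≤ A * (4 * (4:ℝ)^j / 2^(j*d)) := by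
        calc ((n i0 : ℤ) : ℝ) * σ2 n ≤ A * znorm n ^ ((2:ℝ) - d) := hkey n hz1 hzN hpos
          _ ≤ A * (4 * (4:ℝ)^j / 2^(j*d)) := mul_le_mul_of_nonneg_left hrpow hA0.le
      have hF0 : 0 ≤ ((n i0 : ℤ) : ℝ) * σ2 n :=
        mul_nonneg (by exact_mod_cast hpos.le) (hσ0 n)
      calc F n = 2 * Real.exp (-2 * znorm n ^ 2 * t) * (((n i0 : ℤ) : ℝ) * σ2 n) := by
            simp only [hF]; ring
        _ ≤ 2 * Real.exp (-2 * (4:ℝ)^j * t) * (((n i0 : ℤ) : ℝ) * σ2 n) := by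
            apply mul_le_mul_of_nonneg_right (by nlinarith) hF0
        _ ≤ 2 * Real.exp (-2 * (4:ℝ)^j * t) * (A * (4 * (4:ℝ)^j / 2^(j*d))) := by
            apply mul_le_mul_of_nonneg_left hmul (by positivity)
        _ = 8 * A * Real.exp (-2 * (4:ℝ)^j * t) * ((4:ℝ)^j / 2^(j*d)) := by ring
    have hsub : s ⊆ Fintype.piFinset fun _ : Fin d =>
        Finset.Icc (-((2:ℤ)^(j+1))) ((2:ℤ)^(j+1)) := by
      intro n hn
      rw [Fintype.mem_piFinset]
      intro i
      rw [Finset.mem_Icc]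
      have hshj : sh n = j := (Finset.mem_filter.mp hn).2
      have hqlt : Q n < 4 ^ (j+1) := by
        rw [← hshj]
        exact Nat.lt_pow_succ_log_self (by norm_num) _
      have h1 : (n i).natAbs ^ 2 < 4 ^ (j+1) := lt_of_le_of_lt (hQsingle n i) hqlt
      have h2 : (n i).natAbs < 2 ^ (j+1) := by
        by_contra h
        push_neg at h
        have h3 : (2^(j+1))^2 ≤ ((n i).natAbs)^2 := Nat.pow_le_pow_left h 2
        have h4 : (4:ℕ)^(j+1) = (2^(j+1))^2 := by
          rw [← pow_mul, mul_comm (j+1) 2, pow_mul]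
          norm_num
        omega
      have h3 : |n i| ≤ (2:ℤ)^(j+1) := by
        rw [Int.abs_eq_natAbs]
        have : ((n i).natAbs : ℤ) ≤ ((2^(j+1) : ℕ) : ℤ) := by exact_mod_cast Nat.le_of_lt h2
        calc ((n i).natAbs : ℤ) ≤ ((2^(j+1) : ℕ) : ℤ) := this
          _ = (2:ℤ)^(j+1) := by push_cast; ring
      exact abs_le.mp h3
    have hcard : (s.card : ℝ) ≤ (8:ℝ)^d * 2^(j*d) := by
      have h1 : s.card ≤ ((2:ℕ)^(j+3))^d := by
        calc s.card ≤ (Fintype.piFinset fun _ : Fin d =>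
              Finset.Icc (-((2:ℤ)^(j+1))) ((2:ℤ)^(j+1))).card := Finset.card_le_card hsub
          _ = ((Finset.Icc (-((2:ℤ)^(j+1))) ((2:ℤ)^(j+1))).card)^d := by
              rw [Fintype.card_piFinset]
              simp
          _ ≤ ((2:ℕ)^(j+3))^d := by
              apply Nat.pow_le_pow_left
              have hc : (((Finset.Icc (-((2:ℤ)^(j+1))) ((2:ℤ)^(j+1))).card : ℤ))
                  = 2 * 2^(j+1) + 1 := by
                rw [Int.card_Icc, Int.toNat_of_nonneg
                  (by have : (0:ℤ) < 2^(j+1) := by positivity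
                      linarith)]
                ring
              have hle : (((Finset.Icc (-((2:ℤ)^(j+1))) ((2:ℤ)^(j+1))).card : ℤ))
                  ≤ (((2:ℕ)^(j+3) : ℕ) : ℤ) := by
                rw [hc]
                have h3 : (0:ℤ) < 2^(j+1) := by positivity
                have h4 : (((2:ℕ)^(j+3) : ℕ) : ℤ) = 4 * 2^(j+1) := by
                  push_cast
                  rw [show j+3 = (j+1)+2 by omega, pow_add]
                  ring
                rw [h4]
                linarith
              exact_mod_cast hle
      calc (s.card : ℝ) ≤ (((2:ℕ)^(j+3))^d : ℝ) := by exact_mod_cast h1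
        _ = (8:ℝ)^d * 2^(j*d) := by
            push_cast
            rw [← pow_mul, show (j+3)*d = 3*d + j*d by ring, pow_add]
            congr 1
            rw [pow_mul]
            norm_num
    have hB0 : (0:ℝ) ≤ 8 * A * Real.exp (-2 * (4:ℝ)^j * t) * ((4:ℝ)^j / 2^(j*d)) := by
      positivity
    calc ∑ n ∈ s, F n
        ≤ s.card • (8 * A * Real.exp (-2 * (4:ℝ)^j * t) * ((4:ℝ)^j / 2^(j*d))) :=
          Finset.sum_le_card_nsmul s F _ hpoint
      _ = (s.card : ℝ) * (8 * A * Real.exp (-2 * (4:ℝ)^j * t) * ((4:ℝ)^j / 2^(j*d))) :=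
          nsmul_eq_mul _ _
      _ ≤ ((8:ℝ)^d * 2^(j*d)) * (8 * A * Real.exp (-2 * (4:ℝ)^j * t) * ((4:ℝ)^j / 2^(j*d))) :=
          mul_le_mul_of_nonneg_right hcard hB0
      _ = (8:ℝ)^d * 8 * A * ((4:ℝ)^j * Real.exp (-2 * 4^j * t)) := by
          have h2 : ((2:ℝ)^(j*d)) ≠ 0 := by positivity
          field_simp
  have hg0 : ∀ j : ℕ, (0:ℝ) ≤ (4:ℝ)^j * Real.exp (-2 * 4^j * t) := by
    intro j; positivity
  have hS1 : ∑ j ∈ Finset.range (J+1), (4:ℝ)^j * Real.exp (-2 * 4^j * t) ≤ 4 * (N:ℝ)^2 := by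
    have h1 : ∀ j ∈ Finset.range (J+1), (4:ℝ)^j * Real.exp (-2 * 4^j * t) ≤ (4:ℝ)^j := by
      intro j _
      have he : Real.exp (-2 * (4:ℝ)^j * t) ≤ 1 := by
        apply Real.exp_le_one_iff.mpr
        have : (0:ℝ) < (4:ℝ)^j := by positivity
        nlinarith
      nlinarith [pow_pos (show (0:ℝ) < 4 by norm_num) j]
    calc ∑ j ∈ Finset.range (J+1), (4:ℝ)^j * Real.exp (-2 * 4^j * t)
        ≤ ∑ j ∈ Finset.range (J+1), (4:ℝ)^j := Finset.sum_le_sum h1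
      _ ≤ 4 ^ (J+1) := sum_pow_four_le _
      _ = 4 * 4 ^ J := by ring
      _ ≤ 4 * (N:ℝ)^2 := by
        have h2 : (4:ℕ)^J ≤ N^2 := Nat.pow_log_le_self 4 (by positivity)
        have h3 : ((4:ℝ))^J ≤ ((N:ℝ))^2 := by exact_mod_cast h2
        linarith
  have hS2 : ∑ j ∈ Finset.range (J+1), (4:ℝ)^j * Real.exp (-2 * 4^j * t) ≤ 7 / t := by
    set j0 : ℕ := Nat.log 4 ⌊1/t⌋₊ with hj0
    have hfl1 : 1 ≤ ⌊1/t⌋₊ := by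
      apply Nat.le_floor
      rw [Nat.cast_one, le_div_iff₀ ht]
      linarith
    have h4j0 : (4:ℝ)^j0 ≤ 1/t := by
      have h := Nat.pow_log_le_self 4 (Nat.one_le_iff_ne_zero.mp hfl1)
      calc (4:ℝ)^j0 = ((4^j0 : ℕ) : ℝ) := by push_cast; ring
        _ ≤ (⌊1/t⌋₊ : ℝ) := Nat.cast_le.mpr h
        _ ≤ 1/t := Nat.floor_le (by positivity)
    have h4j0' : ((4:ℝ)^j0)⁻¹ ≤ 4 * t := by
      have h := Nat.lt_pow_succ_log_self (by norm_num : 1 < 4) ⌊1/t⌋₊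
      have hcast : (⌊1/t⌋₊ : ℝ) + 1 ≤ (4:ℝ)^(j0+1) := by
        have h2 : ⌊1/t⌋₊ + 1 ≤ 4^(j0+1) := h
        exact_mod_cast h2
      have hlt : 1/t < (4:ℝ)^(j0+1) := lt_of_lt_of_le (Nat.lt_floor_add_one _) hcast
      have hp : (0:ℝ) < (4:ℝ)^j0 := by positivity
      rw [pow_succ, div_lt_iff₀ ht] at hlt
      have hone : 1 ≤ 4 * t * (4:ℝ)^j0 := by nlinarith
      calc ((4:ℝ)^j0)⁻¹ = ((4:ℝ)^j0)⁻¹ * 1 := (mul_one _).symm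
        _ ≤ ((4:ℝ)^j0)⁻¹ * (4 * t * (4:ℝ)^j0) := mul_le_mul_of_nonneg_left hone (by positivity)
        _ = 4 * t := by field_simp
    have hsplit := Finset.sum_filter_add_sum_filter_not (Finset.range (J+1)) (fun j => j < j0)
      (fun j => (4:ℝ)^j * Real.exp (-2 * 4^j * t))
    have hfirst : ∑ j ∈ (Finset.range (J+1)).filter (fun j => j < j0),
        (4:ℝ)^j * Real.exp (-2 * 4^j * t) ≤ 1/t := by
      calc ∑ j ∈ (Finset.range (J+1)).filter (fun j => j < j0), (4:ℝ)^j * Real.exp (-2 * 4^j * t)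
          ≤ ∑ j ∈ (Finset.range (J+1)).filter (fun j => j < j0), (4:ℝ)^j := by
            apply Finset.sum_le_sum
            intro j _
            have he : Real.exp (-2 * (4:ℝ)^j * t) ≤ 1 := by
              apply Real.exp_le_one_iff.mpr
              have : (0:ℝ) < (4:ℝ)^j := by positivity
              nlinarith
            nlinarith [pow_pos (show (0:ℝ) < 4 by norm_num) j]
        _ ≤ ∑ j ∈ Finset.range j0, (4:ℝ)^j := by
            apply Finset.sum_le_sum_of_subset_of_nonneg
            · intro j hj
              exact Finset.mem_range.mpr (Finset.mem_filter.mp hj).2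
            · intro j _ _; positivity
        _ ≤ 4 ^ j0 := sum_pow_four_le _
        _ ≤ 1/t := h4j0
    have hsecond : ∑ j ∈ (Finset.range (J+1)).filter (fun j => ¬ j < j0),
        (4:ℝ)^j * Real.exp (-2 * 4^j * t) ≤ 6/t := by
      calc ∑ j ∈ (Finset.range (J+1)).filter (fun j => ¬ j < j0), (4:ℝ)^j * Real.exp (-2 * 4^j * t)
          ≤ ∑ j ∈ (Finset.range (J+1)).filter (fun j => ¬ j < j0), t⁻¹ * t⁻¹ * ((4:ℝ)⁻¹)^j := by
            apply Finset.sum_le_sum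
            intro j _
            have := key_exp ((4:ℝ)^j) t (by positivity) ht
            calc (4:ℝ)^j * Real.exp (-2 * 4^j * t) ≤ t⁻¹ * t⁻¹ * ((4:ℝ)^j)⁻¹ := this
              _ = t⁻¹ * t⁻¹ * ((4:ℝ)⁻¹)^j := by rw [inv_pow]
        _ = t⁻¹ * t⁻¹ * ∑ j ∈ (Finset.range (J+1)).filter (fun j => ¬ j < j0), ((4:ℝ)⁻¹)^j := by
            rw [Finset.mul_sum]
        _ ≤ t⁻¹ * t⁻¹ * (((4:ℝ)⁻¹)^j0 * (4/3)) := by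
            apply mul_le_mul_of_nonneg_left ?_ (by positivity)
            calc ∑ j ∈ (Finset.range (J+1)).filter (fun j => ¬ j < j0), ((4:ℝ)⁻¹)^j
                ≤ ∑ j ∈ Finset.Ico j0 (J+1), ((4:ℝ)⁻¹)^j := by
                  apply Finset.sum_le_sum_of_subset_of_nonneg
                  · intro j hj
                    rw [Finset.mem_filter, Finset.mem_range] at hj
                    rw [Finset.mem_Ico]
                    omega
                  · intro j _ _; positivity
              _ = ∑ i ∈ Finset.range (J+1-j0), ((4:ℝ)⁻¹)^(j0+i) :=
                  Finset.sum_Ico_eq_sum_range _ _ _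
              _ = ((4:ℝ)⁻¹)^j0 * ∑ i ∈ Finset.range (J+1-j0), ((4:ℝ)⁻¹)^i := by
                  rw [Finset.mul_sum]
                  exact Finset.sum_congr rfl fun i _ => by rw [pow_add]
              _ ≤ ((4:ℝ)⁻¹)^j0 * (4/3) := by
                  apply mul_le_mul_of_nonneg_left ?_ (by positivity)
                  have hsum := Summable.sum_le_tsum (Finset.range (J+1-j0))
                    (fun i _ => by positivity)
                    (summable_geometric_of_lt_one (by norm_num) (by norm_num : (4:ℝ)⁻¹ < 1))
                  rw [tsum_geometric_of_lt_one (by norm_num) (by norm_num)] at hsum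
                  calc ∑ i ∈ Finset.range (J+1-j0), ((4:ℝ)⁻¹)^i ≤ ((1:ℝ) - 4⁻¹)⁻¹ := hsum
                    _ = 4/3 := by norm_num
        _ ≤ 6/t := by
            have hj0inv : ((4:ℝ)⁻¹)^j0 ≤ 4 * t := by rw [inv_pow]; exact h4j0'
            calc t⁻¹ * t⁻¹ * (((4:ℝ)⁻¹)^j0 * (4/3))
                ≤ t⁻¹ * t⁻¹ * ((4 * t) * (4/3)) := by
                  apply mul_le_mul_of_nonneg_left ?_ (by positivity)
                  apply mul_le_mul_of_nonneg_right hj0inv (by norm_num)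
              _ = 16/3 * (1/t) * (t * t⁻¹) := by ring
              _ = 16/3 * (1/t) := by rw [mul_inv_cancel₀ ht.ne']; ring
              _ ≤ 6/t := by
                  rw [show (6:ℝ)/t = 6 * (1/t) by ring]
                  apply mul_le_mul_of_nonneg_right (by norm_num) (by positivity)
    calc ∑ j ∈ Finset.range (J+1), (4:ℝ)^j * Real.exp (-2 * 4^j * t)
        = _ + _ := hsplit.symm
      _ ≤ 1/t + 6/t := add_le_add hfirst hsecond
      _ = 7/t := by ring
  calc ∑ j ∈ Finset.range (J+1), ∑ n ∈ (box.filter P).filter (fun n => sh n = j), F n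
      ≤ ∑ j ∈ Finset.range (J+1), (8:ℝ)^d * 8 * A * ((4:ℝ)^j * Real.exp (-2 * 4^j * t)) :=
        Finset.sum_le_sum fun j _ => hfiber_le j
    _ = (8:ℝ)^d * 8 * A * ∑ j ∈ Finset.range (J+1), (4:ℝ)^j * Real.exp (-2 * 4^j * t) := by
        rw [← Finset.mul_sum]
    _ ≤ 56 * (8:ℝ)^d * A * min ((N:ℝ)^2) (1/t) := by
        have hK : (0:ℝ) ≤ (8:ℝ)^d * 8 * A := by positivity
        have hN0 : (0:ℝ) ≤ (N:ℝ)^2 := by positivity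
        have hmin : ∑ j ∈ Finset.range (J+1), (4:ℝ)^j * Real.exp (-2 * 4^j * t)
            ≤ 7 * min ((N:ℝ)^2) (1/t) := by
          rcases le_total ((N:ℝ)^2) (1/t) with h | h
          · rw [min_eq_left h]; nlinarith
          · rw [min_eq_right h]
            calc ∑ j ∈ Finset.range (J+1), (4:ℝ)^j * Real.exp (-2 * 4^j * t) ≤ 7/t := hS2
              _ = 7 * (1/t) := by ring
        calc (8:ℝ)^d * 8 * A * ∑ j ∈ Finset.range (J+1), (4:ℝ)^j * Real.exp (-2 * 4^j * t)
            ≤ (8:ℝ)^d * 8 * A * (7 * min ((N:ℝ)^2) (1/t)) :=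
              mul_le_mul_of_nonneg_left hmin hK
          _ = 56 * (8:ℝ)^d * A * min ((N:ℝ)^2) (1/t) := by ring
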